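/- Let u : ℝ → ℝ be differentiable. Let φ ∈ ℝ and (ξ₂,ξ₄,ξ₅,ξ₆) ∈ ℝ⁴\{0}, set r = √(ξ₂²+ξ₄²+ξ₅²+ξ₆²), x = (cosφ, 0, sinφ, 0, 0, 0) ∈ ℝ⁶, ξ = (0,ξ₂,0,ξ₄,ξ₅,ξ₆) ∈ ℝ⁶, and z = cosh(r)·x + i·(sinh(r)/r)·ξ ∈ ℂ⁶. Then, with η = ξ₁₂ + ξ₃₄ + ξ₅₆ ∈ M(6,ℝ), one has u′(‖z‖²)·((i·z) ∙ (η·z)) = −K(r)·(cosφ·ξ₂ + sinφ·ξ₄), where K(t) = u′(cosh(2t))·sinh(2t)/t. -/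

import Mathlib

open Real Complex Matrix

noncomputable section

/-- The real inner product on `ℂ^m`:
`v ∙ w = ∑ⱼ (Re vⱼ)(Re wⱼ) + (Im vⱼ)(Im wⱼ)`. -/
noncomputable def dotR {m : ℕ} (v w : Fin m → ℂ) : ℝ :=
  ∑ j, ((v j).re * (w j).re + (v j).im * (w j).im)

/-- `ξ_{ij} = E_{ji} − E_{ij}`. -/
def xiMat {m : ℕ} (i j : Fin m) : Matrix (Fin m) (Fin m) ℝ :=
  Matrix.single j i 1 - Matrix.single i j 1

/-- The moment map component `μ_η` of the diagonal `SO(2)`-action on `T*S⁵`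
at points of `Φ(L₂)`, `L₂ = T^{*⊥}S¹ ⊂ T*S⁵`:
`u′(‖z‖²)·((i·z) ∙ (η·z)) = −K(r)·(cosφ·ξ₂ + sinφ·ξ₄)` with
`K(t) = u′(cosh 2t)·sinh(2t)/t`. -/
theorem stmt_5 (u : ℝ → ℝ) (hu : Differentiable ℝ u)
    (φ ξ₂ ξ₄ ξ₅ ξ₆ : ℝ) (hξ : ¬(ξ₂ = 0 ∧ ξ₄ = 0 ∧ ξ₅ = 0 ∧ ξ₆ = 0))
    (r : ℝ) (hr : r = Real.sqrt (ξ₂ ^ 2 + ξ₄ ^ 2 + ξ₅ ^ 2 + ξ₆ ^ 2))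
    (x ξ : Fin 6 → ℝ)
    (hx : x = ![Real.cos φ, 0, Real.sin φ, 0, 0, 0])
    (hξv : ξ = ![0, ξ₂, 0, ξ₄, ξ₅, ξ₆])
    (z : Fin 6 → ℂ)
    (hz : z = fun j => ((Real.cosh r * x j : ℝ) : ℂ) +
      Complex.I * ((Real.sinh r / r * ξ j : ℝ) : ℂ))
    (η : Matrix (Fin 6) (Fin 6) ℝ) (hη : η = xiMat 0 1 + xiMat 2 3 + xiMat 4 5)
    (K : ℝ → ℝ) (hK : K = fun t => deriv u (Real.cosh (2 * t)) * Real.sinh (2 * t) / t) :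
    deriv u (dotR z z) *
        dotR (fun j => Complex.I * z j) ((η.map (fun a => (a : ℂ))).mulVec z)
      = -K r * (Real.cos φ * ξ₂ + Real.sin φ * ξ₄) := by
  have hr2 : ξ₂ ^ 2 + ξ₄ ^ 2 + ξ₅ ^ 2 + ξ₆ ^ 2 = r ^ 2 := by
    rw [hr, Real.sq_sqrt]; positivity
  have hrpos : 0 < r := by
    rw [hr]
    apply Real.sqrt_pos.2
    rcases not_and_or.1 hξ with h | h
    · positivity
    rcases not_and_or.1 h with h | h
    · positivity
    rcases not_and_or.1 h with h | h
    · positivity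
    · positivity
  have hrne : r ≠ 0 := hrpos.ne'
  set c := Real.cosh r with hc
  set s := Real.sinh r / r with hs
  have hre : ∀ j, (z j).re = c * x j := by
    intro j; simp [hz]
  have him : ∀ j, (z j).im = s * ξ j := by
    intro j; simp [hz]
  have hx0 : x 0 = Real.cos φ := by rw [hx]; rfl
  have hx1 : x 1 = 0 := by rw [hx]; rfl
  have hx2 : x 2 = Real.sin φ := by rw [hx]; rfl
  have hx3 : x 3 = 0 := by rw [hx]; rfl
  have hx4 : x 4 = 0 := by rw [hx]; rfl
  have hx5 : x 5 = 0 := by rw [hx]; rfl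
  have hv0 : ξ 0 = 0 := by rw [hξv]; rfl
  have hv1 : ξ 1 = ξ₂ := by rw [hξv]; rfl
  have hv2 : ξ 2 = 0 := by rw [hξv]; rfl
  have hv3 : ξ 3 = ξ₄ := by rw [hξv]; rfl
  have hv4 : ξ 4 = ξ₅ := by rw [hξv]; rfl
  have hv5 : ξ 5 = ξ₆ := by rw [hξv]; rfl
  have hsr : s * r = Real.sinh r := by rw [hs]; field_simp
  have hdz : dotR z z = Real.cosh (2 * r) := by
    simp only [dotR, Fin.sum_univ_six, hre, him, hx0, hx1, hx2, hx3, hx4, hx5,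
      hv0, hv1, hv2, hv3, hv4, hv5]
    have h1 : s * ξ₂ * (s * ξ₂) + s * ξ₄ * (s * ξ₄) + s * ξ₅ * (s * ξ₅)
        + s * ξ₆ * (s * ξ₆) = Real.sinh r ^ 2 := by
      linear_combination s ^ 2 * hr2 + (s * r + Real.sinh r) * hsr
    linear_combination h1 + c ^ 2 * Real.cos_sq_add_sin_sq φ - Real.cosh_two_mul r
  have hw : (η.map (fun a => (a : ℂ))).mulVec z
      = ![-(z 1), z 0, -(z 3), z 2, -(z 5), z 4] := by
    funext j
    fin_cases j <;>
      simp (config := { decide := true }) [hη, Matrix.mulVec, dotProduct,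
        Fin.sum_univ_six, xiMat, Matrix.single] <;>
      rfl
  have hdot : dotR (fun j => Complex.I * z j) ((η.map (fun a => (a : ℂ))).mulVec z)
      = -(Real.sinh (2 * r) / r) * (Real.cos φ * ξ₂ + Real.sin φ * ξ₄) := by
    have hW0 : (![-(z 1), z 0, -(z 3), z 2, -(z 5), z 4] : Fin 6 → ℂ) 0 = -(z 1) := rfl
    have hW1 : (![-(z 1), z 0, -(z 3), z 2, -(z 5), z 4] : Fin 6 → ℂ) 1 = z 0 := rfl
    have hW2 : (![-(z 1), z 0, -(z 3), z 2, -(z 5), z 4] : Fin 6 → ℂ) 2 = -(z 3) := rfl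
    have hW3 : (![-(z 1), z 0, -(z 3), z 2, -(z 5), z 4] : Fin 6 → ℂ) 3 = z 2 := rfl
    have hW4 : (![-(z 1), z 0, -(z 3), z 2, -(z 5), z 4] : Fin 6 → ℂ) 4 = -(z 5) := rfl
    have hW5 : (![-(z 1), z 0, -(z 3), z 2, -(z 5), z 4] : Fin 6 → ℂ) 5 = z 4 := rfl
    rw [hw]
    simp only [dotR, Fin.sum_univ_six, Complex.mul_re, Complex.mul_im,
      Complex.I_re, Complex.I_im, Complex.neg_re, Complex.neg_im,
      Matrix.cons_val_zero, Matrix.cons_val_one, Matrix.head_cons,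
      Matrix.cons_val_two, Matrix.tail_cons, Matrix.cons_val_three,
      Matrix.cons_val_four, Matrix.cons_val_succ]
    simp only [hW0, hW1, hW2, hW3, hW4, hW5, Complex.neg_re, Complex.neg_im]
    simp only [hre, him, hx0, hx1, hx2, hx3, hx4, hx5, hv0, hv1, hv2, hv3, hv4, hv5]
    rw [Real.sinh_two_mul, ← hsr, hc]
    field_simp
    ring
  rw [hdz, hdot, hK]
  simp only
  ring
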